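/- arXiv:2503.00843 — 7 statements merged into one kernel-verified Lean document; each statement's English description precedes it below -/
import Mathlib

section
/- Let N be a positive integer with N ≡ 0 (mod 4) and N ≢ 2 (mod 3). If the equation (N−1)^x + N^y + (N+1)^z = (N+2)^w has a solution in positive integers x, y, z, w, then N = 4^e for some positive integer e. -/
theorem N_is_power_of_four (N : ℕ) (hN : 0 < N) (hN4 : N % 4 = 0) (hN3 : N % 3 ≠ 2)
    (hsol : ∃ x y z w : ℕ, 0 < x ∧ 0 < y ∧ 0 < z ∧ 0 < w ∧
      (N - 1) ^ x + N ^ y + (N + 1) ^ z = (N + 2) ^ w) :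
    ∃ e : ℕ, 0 < e ∧ N = 4 ^ e := by
  obtain ⟨x, y, z, w, hx, hy, hz, hw, heq⟩ := hsol
  have h4N : 4 ∣ N := Nat.dvd_of_mod_eq_zero hN4
  have hN4' : 4 ≤ N := Nat.le_of_dvd hN h4N
  have hN1 : 1 ≤ N := hN
  -- w ≥ 2
  have hw2 : 2 ≤ w := by
    by_contra h
    interval_cases w
    rw [pow_one] at heq
    have h1 : N - 1 ≤ (N - 1) ^ x := Nat.le_self_pow hx.ne' _
    have h2 : N ≤ N ^ y := Nat.le_self_pow hy.ne' _
    have h3 : N + 1 ≤ (N + 1) ^ z := Nat.le_self_pow hz.ne' _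
    have h1' : 3 ≤ x + y + z := by omega
    omega
  -- x is odd, via ZMod 4
  have hxodd : Odd x := by
    by_contra hxe
    rw [Nat.not_odd_iff_even] at hxe
    have hc : ((N - 1) ^ x + N ^ y + (N + 1) ^ z : ZMod 4) = ((N + 2) ^ w : ℕ) := by
      exact_mod_cast congrArg (Nat.cast : ℕ → ZMod 4) heq
    have hNz : ((N : ℕ) : ZMod 4) = 0 := (ZMod.natCast_eq_zero_iff N 4).mpr h4N
    push_cast [Nat.cast_sub hN1] at hc
    rw [hNz] at hc
    simp only [zero_sub, zero_add, zero_pow hy.ne'] at hc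
    rw [hxe.neg_one_pow] at hc
    have h2w : (2 : ZMod 4) ^ w = 0 := by
      obtain ⟨v, rfl⟩ : ∃ v, w = 2 + v := ⟨w - 2, by omega⟩
      rw [pow_add]
      norm_num
      rw [show ((4:ZMod 4) = 0) by decide, zero_mul]
    rw [h2w, one_pow] at hc
    revert hc
    decide
  -- N ∣ 2 ^ w, via ZMod N
  have hdvd : N ∣ 2 ^ w := by
    have : NeZero N := ⟨hN.ne'⟩
    have hc : ((N - 1) ^ x + N ^ y + (N + 1) ^ z : ZMod N) = ((N + 2) ^ w : ℕ) := by
      exact_mod_cast congrArg (Nat.cast : ℕ → ZMod N) heq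
    have hNz : ((N : ℕ) : ZMod N) = 0 := ZMod.natCast_self N
    push_cast [Nat.cast_sub hN1] at hc
    rw [hNz] at hc
    simp only [zero_sub, zero_add, zero_pow hy.ne'] at hc
    rw [hxodd.neg_one_pow] at hc
    have h2w : ((2 ^ w : ℕ) : ZMod N) = 0 := by push_cast; linear_combination -hc
    exact (ZMod.natCast_eq_zero_iff _ N).mp h2w
  obtain ⟨k, hk, hNk⟩ := (Nat.dvd_prime_pow Nat.prime_two).mp hdvd
  -- k is even
  rcases Nat.even_or_odd k with ⟨m, hm⟩ | ⟨m, hm⟩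
  · refine ⟨m, ?_, ?_⟩
    · rcases Nat.eq_zero_or_pos m with rfl | hm'
      · simp [hm] at hNk; omega
      · exact hm'
    · rw [hNk, hm, ← two_mul, pow_mul]; norm_num
  · exfalso
    apply hN3
    rw [hNk, hm, pow_succ, pow_mul, Nat.mul_mod, Nat.pow_mod]
    norm_num
end

section
/- Let e be a positive integer and let (x, y, z, w) be a solution in positive integers of (4^e−1)^x + 4^{e·y} + (4^e+1)^z = (4^e+2)^w. Then y is odd. -/
/-!
Write `a = 4 ^ e`, so `a ≡ -1` modulo `a + 1`. If `y` were even, the equation reduced modulo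
`a + 1` would read `(-2) ^ x + 1 + 0 = 1`, so the odd number `a + 1 > 1` would divide `2 ^ x`.
-/

lemma natCast_eq_neg_one_zmod_succ (a : ℕ) : (a : ZMod (a + 1)) = -1 :=
  eq_neg_of_add_eq_zero_left (by exact_mod_cast ZMod.natCast_self (a + 1))

lemma succ_dvd_two_pow_of_even {a x y z w : ℕ} (ha : 1 ≤ a) (hy : Even y) (hz : z ≠ 0)
    (h : (a - 1) ^ x + a ^ y + (a + 1) ^ z = (a + 2) ^ w) : a + 1 ∣ 2 ^ x := by
  have hmod := congrArg (Nat.cast : ℕ → ZMod (a + 1)) h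
  push_cast [Nat.cast_sub ha, natCast_eq_neg_one_zmod_succ, hy.neg_one_pow] at hmod
  have hneg : (-2 : ZMod (a + 1)) ^ x = 0 := by norm_num [zero_pow hz] at hmod; exact hmod
  rw [← ZMod.natCast_eq_zero_iff, Nat.cast_pow, Nat.cast_ofNat]
  rwa [neg_pow, neg_one_pow_mul_eq_zero_iff] at hneg

lemma odd_of_pow_add_pow_add_pow_eq {a x y z w : ℕ} (ha : Even a) (ha0 : a ≠ 0) (hz : z ≠ 0)
    (h : (a - 1) ^ x + a ^ y + (a + 1) ^ z = (a + 2) ^ w) : Odd y := by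
  by_contra hy
  have hdvd := succ_dvd_two_pow_of_even (Nat.one_le_iff_ne_zero.mpr ha0)
    (Nat.not_odd_iff_even.mp hy) hz h
  have hcop : Nat.Coprime (a + 1) (2 ^ x) := (Nat.coprime_two_right.mpr ha.add_one).pow_right x
  have hone : a + 1 = 1 := hcop.eq_one_of_dvd hdvd
  omega

theorem y_odd_general (e x y z w : ℕ) (he : 0 < e)
    (hz : 0 < z)
    (heq : (4 ^ e - 1) ^ x + 4 ^ (e * y) + (4 ^ e + 1) ^ z = (4 ^ e + 2) ^ w) :
    Odd y := by
  rw [pow_mul] at heq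
  exact odd_of_pow_add_pow_add_pow_eq (Nat.even_pow.mpr ⟨by decide, he.ne'⟩) (by positivity)
    hz.ne' heq

theorem y_odd (e x y z w : ℕ) (he : 0 < e)
    (hx : 0 < x) (hy : 0 < y) (hz : 0 < z) (hw : 0 < w)
    (heq : (4 ^ e - 1) ^ x + 4 ^ (e * y) + (4 ^ e + 1) ^ z = (4 ^ e + 2) ^ w) :
    Odd y :=
  y_odd_general e x y z w he hz heq
end

section
/- Let e be a positive integer and let (x, y, z, w) be a solution in positive integers of (4^e−1)^x + 4^{e·y} + (4^e+1)^z = (4^e+2)^w. Then x > 1 and x ≡ 1 (mod 2e); in particular, x ≥ 2e + 1. -/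
theorem x_one_mod_two_e (e x y z w : ℕ) (he : 0 < e)
    (hx : 0 < x) (hy : 0 < y) (hz : 0 < z) (hw : 0 < w)
    (heq : (4 ^ e - 1) ^ x + 4 ^ (e * y) + (4 ^ e + 1) ^ z = (4 ^ e + 2) ^ w) :
    1 < x ∧ x ≡ 1 [MOD 2 * e] ∧ 2 * e + 1 ≤ x := by
  set m : ℕ := 4 ^ e + 1 with hm
  have h1 : 1 ≤ 4 ^ e := Nat.one_le_pow _ _ (by norm_num)
  have h4le : 4 ≤ 4 ^ e := Nat.le_self_pow he.ne' 4
  have hm5 : 5 ≤ m := by omega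
  have h2dvd : 2 ∣ 4 ^ e := dvd_pow (by norm_num) he.ne'
  haveI : NeZero m := ⟨by omega⟩
  have hcast : ∀ n : ℕ, ((n : ZMod m) = 0 ↔ m ∣ n) := fun n =>
    (ZMod.natCast_eq_zero_iff n m)
  -- 4^e = -1 in ZMod m
  have hm0 : ((m : ℕ) : ZMod m) = 0 := ZMod.natCast_self m
  have h4 : ((4 : ZMod m)) ^ e = -1 := by
    have : ((4 : ZMod m)) ^ e + 1 = 0 := by
      have := hm0
      rw [hm] at this
      push_cast at this
      exact this
    linear_combination this
  -- cast the main equation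
  have H := congrArg (Nat.cast : ℕ → ZMod m) heq
  push_cast [Nat.cast_sub h1] at H
  rw [pow_mul] at H
  rw [h4] at H
  norm_num [zero_pow hz.ne'] at H
  -- H : (-1 - 1)^x + (-1)^y = 1  (hopefully)
  -- order of 2
  have hu2e : (2 : ZMod m) ^ (2 * e) = -1 := by
    rw [pow_mul]
    norm_num [h4]
  have hu4e : (2 : ZMod m) ^ (4 * e) = 1 := by
    rw [show 4 * e = 2 * e * 2 by ring, pow_mul, hu2e]
    ring
  have hufin : IsOfFinOrder (2 : ZMod m) :=
    isOfFinOrder_iff_pow_eq_one.mpr ⟨4 * e, by positivity, hu4e⟩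
  set d := orderOf (2 : ZMod m) with hd
  have hdpos : 0 < d := hufin.orderOf_pos
  have hddvd : d ∣ 4 * e := orderOf_dvd_of_pow_eq_one hu4e
  have hud : (2 : ZMod m) ^ d = 1 := pow_orderOf_eq_one _
  have hmdvd : m ∣ 2 ^ d - 1 := by
    rw [← hcast]
    push_cast [Nat.cast_sub (Nat.one_le_two_pow)]
    rw [hud]; ring
  have hdgt : 2 * e < d := by
    have hle : m ≤ 2 ^ d - 1 := Nat.le_of_dvd (by
      have : 2 ≤ 2 ^ d := by
        calc 2 = 2 ^ 1 := rfl
        _ ≤ 2 ^ d := Nat.pow_le_pow_right (by norm_num) hdpos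
      omega) hmdvd
    have h4e2 : 4 ^ e = 2 ^ (2 * e) := by
      rw [pow_mul]; norm_num
    have : 2 ^ (2 * e) < 2 ^ d := by omega
    exact (Nat.pow_lt_pow_iff_right (by norm_num)).mp this
  have hd4e : d = 4 * e := by
    obtain ⟨k, hk⟩ := hddvd
    rcases k with _ | _ | k
    · omega
    · omega
    · nlinarith
  -- case on parity of y
  rcases Nat.even_or_odd y with hye | hyo
  · -- contradiction: 2^x = 0 in ZMod m
    exfalso
    rw [hye.neg_one_pow] at H
    have h20 : (2 : ZMod m) ^ x = 0 := by
      have hx2 : ((-1 : ZMod m)) ^ x * (-1 - 1) ^ x = 2 ^ x := by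
        rw [← mul_pow]; ring_nf
      have : (-1 - 1 : ZMod m) ^ x = 0 := by linear_combination H
      rw [this, mul_zero] at hx2
      exact hx2.symm
    have : m ∣ 2 ^ x := by
      rw [← hcast]; push_cast; exact h20
    have hcop : Nat.Coprime 2 m := (Nat.prime_two.coprime_iff_not_dvd).mpr (by omega)
    have := (Nat.Coprime.pow_left x hcop).symm.eq_one_of_dvd this
    omega
  · rw [hyo.neg_one_pow] at H
    have hkey : (-2 : ZMod m) ^ x = 2 := by linear_combination H
    -- x ≠ 1
    have hx1 : 1 < x := by
      rcases Nat.lt_or_ge 1 x with h | h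
      · exact h
      · interval_cases x
        · exfalso
          rw [pow_one] at hkey
          have : ((4 : ℕ) : ZMod m) = 0 := by push_cast; linear_combination -hkey
          rw [hcast] at this
          have := Nat.le_of_dvd (by norm_num) this
          omega
    -- square: 2^(2x) = 2^2
    have hsq : (2 : ZMod m) ^ (2 * x) = 2 ^ 2 := by
      calc (2 : ZMod m) ^ (2 * x) = ((2 : ZMod m) ^ 2) ^ x := pow_mul 2 2 x
        _ = ((-2 : ZMod m) ^ 2) ^ x := by norm_num
        _ = (-2 : ZMod m) ^ (2 * x) := (pow_mul _ 2 x).symm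
        _ = ((-2 : ZMod m) ^ x) ^ 2 := by rw [mul_comm]; exact pow_mul _ x 2
        _ = 2 ^ 2 := by rw [hkey]
    have hmod : 2 * x ≡ 2 [MOD d] := by
      have hu : IsUnit (2 : ZMod m) := hufin.isUnit
      obtain ⟨v, hv⟩ := hu
      have hv2 : (v : ZMod m) ^ (2 * x) = (v : ZMod m) ^ 2 := by rw [hv]; exact hsq
      have hvu : v ^ (2 * x) = v ^ 2 := Units.ext (by push_cast [hv2]; rfl)
      have := (pow_eq_pow_iff_modEq).mp hvu
      rwa [show orderOf v = d by rw [hd, ← orderOf_units, hv]] at this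
    have hdvd2 : (4 : ℕ) * e ∣ 2 * x - 2 := by
      rw [← hd4e]
      exact (Nat.modEq_iff_dvd' (by omega)).mp hmod.symm
    obtain ⟨k, hk⟩ := hdvd2
    have hk' : 2 * x - 2 = 4 * (e * k) := by rw [hk]; ring
    have hxdvd : 2 * e ∣ x - 1 := by
      set t := e * k with ht
      have hx2 : x - 1 = 2 * t := by omega
      exact ⟨k, by rw [hx2, ht]; ring⟩
    have hxge : 2 * e + 1 ≤ x := by
      obtain ⟨k', hkk⟩ := hxdvd
      rcases Nat.eq_zero_or_pos k' with h | h
      · subst h; simp at hkk; omega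
      · have h2 : 2 * e * 1 ≤ 2 * e * k' := Nat.mul_le_mul_left _ h
        rw [← hkk] at h2
        omega
    exact ⟨hx1, ((Nat.modEq_iff_dvd' (by omega)).mpr hxdvd).symm, hxge⟩
end

section
/- Let e be a positive integer and let (x, y, z, w) be a solution in positive integers of (4^e−1)^x + 4^{e·y} + (4^e+1)^z = (4^e+2)^w. If (e, w) ≠ (1, 2), then w ≥ 2e + 1. -/
lemma nilpotent_pow {R : Type*} [CommRing R] (n c : R) (h : n^2 = 0) (k : ℕ) :
    (1 + c*n)^k = 1 + (k : R)*c*n := by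
  induction k with
  | zero => simp
  | succ k ih =>
    rw [pow_succ, ih]
    push_cast
    linear_combination ((k : R)*c^2) * h

lemma odd_pow_split {R : Type*} [Monoid R] (t : R) (a : ℕ) : t^(2*a+1) = (t^2)^a * t := by
  rw [← pow_mul, ← pow_succ]

lemma expkey : ∀ e : ℕ, 2 ≤ e → (2*e+1)*(2*e) ≤ (2*e-1)*2^(2*e-1) := by
  intro e he
  induction e, he using Nat.le_induction with
  | base => norm_num
  | succ e he ih =>
    have h1 : 2*(e+1)-1 = (2*e-1)+2 := by omega
    rw [h1, pow_add]
    have hp : 8 ≤ 2^(2*e-1) := by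
      calc (8:ℕ) = 2^3 := by norm_num
      _ ≤ 2^(2*e-1) := Nat.pow_le_pow_right (by norm_num) (by omega)
    nlinarith [ih, hp]

lemma sizekey (e : ℕ) (he : 2 ≤ e) : (4^e + 2)^(2*e) < (4^e - 1)^(2^(2*e-1)) := by
  have h4 : (4:ℕ)^e = 2^(2*e) := by rw [pow_mul]; norm_num
  have hq : (4:ℕ) ≤ 2^(2*e) := by
    calc (4:ℕ) = 2^2 := by norm_num
    _ ≤ 2^(2*e) := Nat.pow_le_pow_right (by norm_num) (by omega)
  have hT : (2:ℕ)^(2*e) = 2*2^(2*e-1) := by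
    have h : 2*e-1+1 = 2*e := by omega
    calc (2:ℕ)^(2*e) = 2^(2*e-1+1) := by rw [h]
    _ = 2*2^(2*e-1) := by rw [pow_succ]; ring
  calc (4^e + 2)^(2*e) < (2^(2*e+1))^(2*e) := by
        apply Nat.pow_lt_pow_left _ (by omega)
        rw [h4, pow_succ]; omega
    _ = 2^((2*e+1)*(2*e)) := by rw [← pow_mul]
    _ ≤ 2^((2*e-1)*2^(2*e-1)) := Nat.pow_le_pow_right (by norm_num) (expkey e he)
    _ = (2^(2*e-1))^(2^(2*e-1)) := by rw [← pow_mul]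
    _ ≤ (4^e - 1)^(2^(2*e-1)) := Nat.pow_le_pow_left (by omega) _

theorem w_ge_two_e_plus_one (e x y z w : ℕ) (he : 0 < e)
    (hx : 0 < x) (hy : 0 < y) (hz : 0 < z) (hw : 0 < w)
    (heq : (4 ^ e - 1) ^ x + 4 ^ (e * y) + (4 ^ e + 1) ^ z = (4 ^ e + 2) ^ w)
    (hne : (e, w) ≠ (1, 2)) :
    2 * e + 1 ≤ w := by
  by_contra hcon
  push_neg at hcon
  have h4 : (4:ℕ)^e = 2^(2*e) := by rw [pow_mul]; norm_num
  have h1le : 1 ≤ (4:ℕ)^e := Nat.one_le_pow _ _ (by norm_num)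
  have hN : 4 ≤ (4:ℕ)^e := Nat.le_self_pow he.ne' 4
  have hxpow : (4:ℕ)^e - 1 ≤ (4^e-1)^x := Nat.le_self_pow hx.ne' _
  have hypow : (4:ℕ)^e ≤ 4^(e*y) :=
    Nat.pow_le_pow_right (by norm_num) (Nat.le_mul_of_pos_right e hy)
  have hzpow : (4:ℕ)^e + 1 ≤ (4^e+1)^z := Nat.le_self_pow hz.ne' _
  -- w ≥ 2
  have hw2 : 2 ≤ w := by
    by_contra hw1
    have : w = 1 := by omega
    rw [this, pow_one] at heq
    omega
  -- e = 1 case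
  rcases Nat.lt_or_ge e 2 with he1 | he2
  · have he1' : e = 1 := by omega
    have hw2' : w = 2 := by omega
    exact hne (by rw [he1', hw2'])
  -- x odd (mod 4)
  have hxo : Odd x := by
    rcases Nat.even_or_odd x with hxe | h
    swap; · exact h
    exfalso
    have hc := congrArg (Nat.cast : ℕ → ZMod 4) heq
    push_cast [Nat.cast_sub h1le] at hc
    have h40 : (4 : ZMod 4) = 0 := by decide
    rw [h40, zero_pow he.ne', zero_pow (Nat.mul_ne_zero he.ne' hy.ne')] at hc
    have hwsplit : w = 2 + (w - 2) := by omega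
    rw [hwsplit, pow_add] at hc
    simp only [zero_sub, zero_add] at hc
    rw [hxe.neg_one_pow, one_pow] at hc
    have h220 : (2:ZMod 4)^2 = 0 := by decide
    rw [h220, zero_mul] at hc
    norm_num at hc
    exact absurd hc (by decide)
  -- z odd (mod 3)
  have hzo : Odd z := by
    rcases Nat.even_or_odd z with hze | h
    swap; · exact h
    exfalso
    have hc := congrArg (Nat.cast : ℕ → ZMod 3) heq
    push_cast [Nat.cast_sub h1le] at hc
    have h41 : (4 : ZMod 3) = 1 := by decide
    rw [h41, one_pow, one_pow] at hc
    -- hc : (1 - 1)^x + 1 + (1+1)^z = (1+2)^w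
    norm_num at hc
    rw [zero_pow hx.ne'] at hc
    have h30 : (3 : ZMod 3) = 0 := by decide
    rw [h30, zero_pow hw.ne'] at hc
    -- hc : 0 + 1 + 2^z = 0
    obtain ⟨k, hk⟩ := hze
    rw [hk] at hc
    have h2z : (2 : ZMod 3)^(k+k) = 1 := by
      have h' : (2 : ZMod 3)^(k+k) = ((2:ZMod 3)^2)^k := by rw [← pow_mul]; ring_nf
      have h'' : ((2:ZMod 3)^2) = 1 := by decide
      rw [h', h'', one_pow]
    rw [h2z] at hc
    exact absurd hc (by decide)
  obtain ⟨a, ha⟩ := hxo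
  obtain ⟨b, hb⟩ := hzo
  have hT' : (2:ℕ)^(2*e) = 2*2^(2*e-1) := by
    have h : 2*e-1+1 = 2*e := by omega
    calc (2:ℕ)^(2*e) = 2^(2*e-1+1) := by rw [h]
    _ = 2*2^(2*e-1) := by rw [pow_succ]; ring
  set M := 2^(2*e-1) + 1 with hMdef
  have hM : (4:ℕ)^e + 2 = 2 * M := by rw [h4, hT', hMdef]; ring
  have hModd : Odd M := Even.add_one (Nat.even_pow.mpr ⟨even_two, by omega⟩)
  -- mod 2^(2e+1)
  have hn2P : ((4:ZMod (2^(2*e+1)))^e)^2 = 0 := by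
    have hcast : ((4:ZMod (2^(2*e+1)))^e)^2 = ((4^e*4^e : ℕ) : ZMod (2^(2*e+1))) := by
      push_cast; ring
    rw [hcast, ZMod.natCast_eq_zero_iff, h4, ← pow_add]
    exact pow_dvd_pow 2 (by omega)
  have h2nP : 2*(4:ZMod (2^(2*e+1)))^e = 0 := by
    have hcast : 2*(4:ZMod (2^(2*e+1)))^e = ((2*4^e : ℕ) : ZMod (2^(2*e+1))) := by
      push_cast; ring
    have h2p : 2*4^e = 2^(2*e+1) := by rw [h4, pow_succ]; ring
    rw [hcast, h2p, ZMod.natCast_self]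
  have keyA : ((4:ZMod (2^(2*e+1)))^e - 1)^x = (4:ZMod (2^(2*e+1)))^e - 1 := by
    have hsq : ((4:ZMod (2^(2*e+1)))^e - 1)^2 = 1 := by linear_combination hn2P - h2nP
    rw [ha, odd_pow_split ((4:ZMod (2^(2*e+1)))^e - 1) a, hsq, one_pow, one_mul]
  have keyC : ((4:ZMod (2^(2*e+1)))^e + 1)^z = (4:ZMod (2^(2*e+1)))^e + 1 := by
    have hsq : ((4:ZMod (2^(2*e+1)))^e + 1)^2 = 1 := by linear_combination hn2P + h2nP
    rw [hb, odd_pow_split ((4:ZMod (2^(2*e+1)))^e + 1) b, hsq, one_pow, one_mul]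
  have hP' : (((4^e+2)^w : ℕ) : ZMod (2^(2*e+1))) = ((4^(e*y) : ℕ) : ZMod (2^(2*e+1))) := by
    rw [← heq]
    push_cast [Nat.cast_sub h1le]
    rw [keyA, keyC]
    linear_combination h2nP
  have hmod : (4^e+2)^w ≡ 4^(e*y) [MOD 2^(2*e+1)] := (ZMod.natCast_eq_natCast_iff _ _ _).mp hP'
  rcases Nat.lt_or_ge y 2 with hy1 | hy2
  · -- y = 1
    have hy1' : y = 1 := by omega
    subst hy1'
    rw [mul_one] at hmod heq
    have hlt : (4:ℕ)^e < 2^(2*e+1) := by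
      rw [h4]; exact Nat.pow_lt_pow_right (by norm_num) (by omega)
    have hmm : (4^e+2)^w % 2^(2*e+1) = 4^e := by
      have h' := hmod
      unfold Nat.ModEq at h'
      rw [Nat.mod_eq_of_lt hlt] at h'
      exact h'
    set q := (4^e+2)^w / 2^(2*e+1) with hqdef
    have hrep : (4^e+2)^w = 2^(2*e+1)*q + 4^e := by
      have h0 := Nat.div_add_mod ((4^e+2)^w) (2^(2*e+1))
      rw [hmm] at h0
      exact h0.symm
    have heq2 : 2^w * M^w = 4^e*(2*q+1) := by
      rw [← mul_pow, ← hM, hrep, h4, pow_succ]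
      ring
    have hw2e : w = 2*e := by
      by_contra hne2
      have hwlt : w < 2*e := by omega
      have h2' : 2^(w+1) ∣ 2^w * M^w := by
        rw [heq2]
        have hdd' : (2:ℕ)^(w+1) ∣ 4^e := by
          rw [h4]; exact pow_dvd_pow 2 (by omega)
        exact dvd_mul_of_dvd_left hdd' _
      rw [pow_succ] at h2'
      have h3 : 2 ∣ M^w := (mul_dvd_mul_iff_left (pow_ne_zero w (by norm_num : (2:ℕ) ≠ 0))).mp h2'
      have hoddpow : Odd (M^w) := hModd.pow
      rw [Nat.odd_iff] at hoddpow
      obtain ⟨k, hk⟩ := h3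
      omega
    -- mod 2^(4e)
    have hn2Q : ((4:ZMod (2^(4*e)))^e)^2 = 0 := by
      have hcast : ((4:ZMod (2^(4*e)))^e)^2 = ((4^e*4^e : ℕ) : ZMod (2^(4*e))) := by
        push_cast; ring
      rw [hcast, ZMod.natCast_eq_zero_iff, h4, ← pow_add]
      exact pow_dvd_pow 2 (by omega)
    have keyAQ : ((4:ZMod (2^(4*e)))^e - 1)^x
        = (x:ZMod (2^(4*e)))*(4:ZMod (2^(4*e)))^e - 1 := by
      have hsq : ((4:ZMod (2^(4*e)))^e - 1)^2 = 1 + (-2)*((4:ZMod (2^(4*e)))^e) := by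
        linear_combination hn2Q
      rw [ha, odd_pow_split ((4:ZMod (2^(4*e)))^e - 1) a, hsq, nilpotent_pow _ _ hn2Q a]
      push_cast
      linear_combination (-2*(a:ZMod (2^(4*e)))) * hn2Q
    have keyCQ : ((4:ZMod (2^(4*e)))^e + 1)^z
        = (z:ZMod (2^(4*e)))*(4:ZMod (2^(4*e)))^e + 1 := by
      have hsq : ((4:ZMod (2^(4*e)))^e + 1)^2 = 1 + 2*((4:ZMod (2^(4*e)))^e) := by
        linear_combination hn2Q
      rw [hb, odd_pow_split ((4:ZMod (2^(4*e)))^e + 1) b, hsq, nilpotent_pow _ _ hn2Q b]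
      push_cast
      linear_combination (2*(b:ZMod (2^(4*e)))) * hn2Q
    -- M^(2e) ≡ 1 mod 2^(2e)
    have hMe : (M:ℕ)^(2*e) % 2^(2*e) = 1 := by
      have hc2 : (((2:ℕ)^(2*e-1) : ℕ) : ZMod (2^(2*e)))^2 = 0 := by
        rw [← Nat.cast_pow, ← pow_mul, ZMod.natCast_eq_zero_iff]
        exact pow_dvd_pow 2 (by omega)
      have hcM : ((M:ℕ) : ZMod (2^(2*e))) = 1 + 1*(((2:ℕ)^(2*e-1) : ℕ) : ZMod (2^(2*e))) := by
        rw [hMdef]; push_cast; ring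
      have hz0 : ((2*e : ℕ) : ZMod (2^(2*e))) * (((2:ℕ)^(2*e-1) : ℕ) : ZMod (2^(2*e))) = 0 := by
        rw [← Nat.cast_mul, ZMod.natCast_eq_zero_iff]
        have hee : 2*e*2^(2*e-1) = e*2^(2*e) := by rw [hT']; ring
        rw [hee]
        exact dvd_mul_left _ _
      have h1 : (((M:ℕ)^(2*e) : ℕ) : ZMod (2^(2*e))) = ((1:ℕ) : ZMod (2^(2*e))) := by
        rw [Nat.cast_pow, hcM, nilpotent_pow _ _ hc2 (2*e)]
        push_cast at hz0 ⊢
        linear_combination hz0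
      have h2 := (ZMod.natCast_eq_natCast_iff _ _ _).mp h1
      unfold Nat.ModEq at h2
      rw [Nat.mod_eq_of_lt (by omega : 1 < 2^(2*e))] at h2
      exact h2
    set t := M^(2*e)/2^(2*e) with htdef
    have ht' : M^(2*e) = 2^(2*e)*t + 1 := by
      have h0 := Nat.div_add_mod (M^(2*e)) (2^(2*e))
      rw [hMe] at h0
      exact h0.symm
    have h44 : 2*e + 2*e = 4*e := by omega
    have hRnat : (4^e+2)^w = 2^(4*e)*t + 2^(2*e) := by
      rw [hw2e, hM, mul_pow, ht', Nat.mul_add, mul_one, ← mul_assoc, ← pow_add, h44]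
    have keyRQ : (((4^e+2)^w : ℕ) : ZMod (2^(4*e))) = (4:ZMod (2^(4*e)))^e := by
      rw [hRnat]
      push_cast
      have hzz : (2:ZMod (2^(4*e)))^(4*e) = 0 := by
        have h' := ZMod.natCast_self (2^(4*e))
        push_cast at h'
        exact h'
      have hc24 : (2:ZMod (2^(4*e)))^(2*e) = (4:ZMod (2^(4*e)))^e := by
        have h' : (4:ZMod (2^(4*e))) = 2^2 := by norm_num
        rw [h', ← pow_mul]
      rw [hzz, hc24]
      ring
    have hQ0 := congrArg (Nat.cast : ℕ → ZMod (2^(4*e))) heq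
    rw [keyRQ] at hQ0
    push_cast [Nat.cast_sub h1le] at hQ0
    rw [keyAQ, keyCQ] at hQ0
    have hfin : (((x+z)*2^(2*e) : ℕ) : ZMod (2^(4*e))) = 0 := by
      push_cast
      have hc24 : (2:ZMod (2^(4*e)))^(2*e) = (4:ZMod (2^(4*e)))^e := by
        have h' : (4:ZMod (2^(4*e))) = 2^2 := by norm_num
        rw [h', ← pow_mul]
      rw [hc24]
      linear_combination hQ0
    have hdvQ : 2^(2*e) ∣ x + z := by
      have h1 := (ZMod.natCast_eq_zero_iff _ _).mp hfin
      have h44' : (2:ℕ)^(4*e) = 2^(2*e)*2^(2*e) := by rw [← pow_add, h44]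
      rw [h44'] at h1
      exact (mul_dvd_mul_iff_right (by positivity : (2:ℕ)^(2*e) ≠ 0)).mp h1
    have hge : 2^(2*e) ≤ x + z := Nat.le_of_dvd (by omega) hdvQ
    have hcases : 2^(2*e-1) ≤ x ∨ 2^(2*e-1) ≤ z := by omega
    have hkey := sizekey e he2
    rcases hcases with hbx | hbz
    · have h1 : (4^e-1)^(2^(2*e-1)) ≤ (4^e-1)^x := Nat.pow_le_pow_right (by omega) hbx
      have hcontra : (4^e+2)^w < (4^e+2)^w := by
        calc (4^e+2)^w = (4^e+2)^(2*e) := by rw [hw2e]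
          _ < (4^e-1)^(2^(2*e-1)) := hkey
          _ ≤ (4^e-1)^x := h1
          _ ≤ (4^e-1)^x + 4^e + (4^e+1)^z :=
              (Nat.le_add_right _ _).trans (Nat.le_add_right _ _)
          _ = (4^e+2)^w := heq
      exact lt_irrefl _ hcontra
    · have h1 : (4^e-1)^(2^(2*e-1)) ≤ (4^e+1)^(2^(2*e-1)) := Nat.pow_le_pow_left (by omega) _
      have h2 : (4^e+1)^(2^(2*e-1)) ≤ (4^e+1)^z := Nat.pow_le_pow_right (by omega) hbz
      have hcontra : (4^e+2)^w < (4^e+2)^w := by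
        calc (4^e+2)^w = (4^e+2)^(2*e) := by rw [hw2e]
          _ < (4^e-1)^(2^(2*e-1)) := hkey
          _ ≤ (4^e+1)^z := h1.trans h2
          _ ≤ (4^e-1)^x + 4^e + (4^e+1)^z := Nat.le_add_left _ _
          _ = (4^e+2)^w := heq
      exact lt_irrefl _ hcontra
  · -- y ≥ 2
    have hdd : (2:ℕ)^(2*e+1) ∣ 4^(e*y) := by
      have h4y : (4:ℕ)^(e*y) = 2^(2*(e*y)) := by
        calc (4:ℕ)^(e*y) = (2^2)^(e*y) := by norm_num
        _ = 2^(2*(e*y)) := by rw [← pow_mul]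
      rw [h4y]
      apply pow_dvd_pow 2
      have h1 : e*2 ≤ e*y := Nat.mul_le_mul_left e hy2
      omega
    have hdv : (2:ℕ)^(2*e+1) ∣ (4^e+2)^w :=
      Nat.modEq_zero_iff_dvd.mp (hmod.trans (Nat.modEq_zero_iff_dvd.mpr hdd))
    rw [hM, mul_pow] at hdv
    have h2' : 2^(w+1) ∣ 2^w * M^w := dvd_trans (pow_dvd_pow 2 (by omega)) hdv
    rw [pow_succ] at h2'
    have h3 : 2 ∣ M^w := (mul_dvd_mul_iff_left (pow_ne_zero w (by norm_num : (2:ℕ) ≠ 0))).mp h2'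
    have hoddpow : Odd (M^w) := hModd.pow
    rw [Nat.odd_iff] at hoddpow
    obtain ⟨k, hk⟩ := h3
    omega
end

section
/- Let e be a positive integer and let (x, y, z, w) be a solution in positive integers of (4^e−1)^x + 4^{e·y} + (4^e+1)^z = (4^e+2)^w. Then z is odd. -/
theorem z_odd (e x y z w : ℕ) (he : 0 < e)
    (hx : 0 < x) (hy : 0 < y) (hz : 0 < z) (hw : 0 < w)
    (heq : (4 ^ e - 1) ^ x + 4 ^ (e * y) + (4 ^ e + 1) ^ z = (4 ^ e + 2) ^ w) :
    Odd z := by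
  by_contra hodd
  obtain ⟨k, hk⟩ := (Nat.not_odd_iff_even.mp hodd).exists_two_nsmul z
  have h1 : (1 : ℕ) ≤ 4 ^ e := Nat.one_le_pow _ _ (by norm_num)
  have h3 : ((((4 ^ e - 1) ^ x + 4 ^ (e * y) + (4 ^ e + 1) ^ z : ℕ) : ZMod 3))
      = (((4 ^ e + 2) ^ w : ℕ) : ZMod 3) := by exact_mod_cast congrArg _ heq
  push_cast [Nat.cast_sub h1] at h3
  have h4 : ((4 : ZMod 3)) = 1 := by decide
  rw [h4] at h3
  simp only [one_pow, sub_self, zero_pow hx.ne', zero_add] at h3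
  have h5 : ((1 : ZMod 3) + 2) ^ w = 0 := by
    rw [show ((1:ZMod 3) + 2) = 0 by decide, zero_pow hw.ne']
  rw [h5, hk, two_nsmul] at h3
  rw [show ((1:ZMod 3) + 1) = 2 from by decide, ← two_mul, pow_mul,
    show ((2:ZMod 3) ^ 2) = 1 from by decide, one_pow] at h3
  exact absurd h3 (by decide)
end

section
/- Let e be a positive integer and let (x, y, z, w) be a solution in positive integers of (4^e−1)^x + 4^{e·y} + (4^e+1)^z = (4^e+2)^w with w ≥ 2e + 1. Then y > 1 and x + z ≡ 2^{w−2e} (mod 4^e). -/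
/-- `(1 + a)^n ≡ 1 + n*a` modulo `a^2`. -/
lemma one_add_pow_modeq_aux (a : ℤ) : ∀ n : ℕ, (1 + a) ^ n ≡ 1 + (n : ℤ) * a [ZMOD a ^ 2]
  | 0 => by simp
  | n + 1 => by
    have ih := one_add_pow_modeq_aux a n
    calc (1 + a) ^ (n + 1) = (1 + a) ^ n * (1 + a) := pow_succ _ _
      _ ≡ (1 + (n : ℤ) * a) * (1 + a) [ZMOD a ^ 2] := ih.mul_right _
      _ ≡ 1 + ((n : ℕ) + 1 : ℤ) * a [ZMOD a ^ 2] := by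
          refine Int.modEq_iff_dvd.mpr ⟨-n, ?_⟩
          ring
      _ = 1 + ((n + 1 : ℕ) : ℤ) * a := by push_cast; ring

lemma cancel_aux (N a b : ℤ) (hN : N ≠ 0) (h : N * N ∣ N * a - N * b) : N ∣ a - b := by
  rw [← mul_sub] at h
  exact (mul_dvd_mul_iff_left hN).mp h

theorem y_gt_one_and_cong (e x y z w : ℕ) (he : 0 < e)
    (hx : 0 < x) (hy : 0 < y) (hz : 0 < z) (hw : 0 < w)
    (heq : (4 ^ e - 1) ^ x + 4 ^ (e * y) + (4 ^ e + 1) ^ z = (4 ^ e + 2) ^ w)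
    (hwe : 2 * e + 1 ≤ w) :
    1 < y ∧ x + z ≡ 2 ^ (w - 2 * e) [MOD 4 ^ e] := by
  have hN1 : (1 : ℕ) ≤ 4 ^ e := Nat.one_le_pow _ _ (by norm_num)
  have hNne : ((4 : ℤ) ^ e) ≠ 0 := by positivity
  have h4e : (4 : ℤ) ^ e = 2 ^ (2 * e) := by
    rw [show (4 : ℤ) = 2 ^ 2 by norm_num, ← pow_mul]
  have heqZ : ((4 : ℤ) ^ e - 1) ^ x + (4 : ℤ) ^ (e * y) + ((4 : ℤ) ^ e + 1) ^ z
      = ((4 : ℤ) ^ e + 2) ^ w := by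
    have h := congrArg (Nat.cast : ℕ → ℤ) heq
    push_cast [Nat.cast_sub hN1] at h
    exact_mod_cast h
  -- x is odd
  have hxodd : Odd x := by
    rcases Nat.even_or_odd x with hx2 | hx2
    · exfalso
      have c1 : ((4 : ℤ) ^ e - 1) ^ x ≡ 1 [ZMOD (4 : ℤ) ^ e] := by
        have hb : ((4 : ℤ) ^ e - 1) ≡ -1 [ZMOD (4 : ℤ) ^ e] :=
          Int.modEq_iff_dvd.mpr ⟨-1, by ring⟩
        calc ((4 : ℤ) ^ e - 1) ^ x ≡ (-1) ^ x [ZMOD (4 : ℤ) ^ e] := hb.pow x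
          _ = 1 := hx2.neg_one_pow
      have c2 : ((4 : ℤ)) ^ (e * y) ≡ 0 [ZMOD (4 : ℤ) ^ e] :=
        Int.modEq_zero_iff_dvd.mpr (pow_dvd_pow 4 (Nat.le_mul_of_pos_right e hy))
      have c3 : ((4 : ℤ) ^ e + 1) ^ z ≡ 1 [ZMOD (4 : ℤ) ^ e] := by
        have hb : ((4 : ℤ) ^ e + 1) ≡ 1 [ZMOD (4 : ℤ) ^ e] :=
          Int.modEq_iff_dvd.mpr ⟨-1, by ring⟩
        simpa using hb.pow z
      have c4 : ((4 : ℤ) ^ e + 2) ^ w ≡ 0 [ZMOD (4 : ℤ) ^ e] := by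
        have hb : ((4 : ℤ) ^ e + 2) ≡ 2 [ZMOD (4 : ℤ) ^ e] :=
          Int.modEq_iff_dvd.mpr ⟨-1, by ring⟩
        have h2 : ((2 : ℤ)) ^ w ≡ 0 [ZMOD (4 : ℤ) ^ e] := by
          refine Int.modEq_zero_iff_dvd.mpr ?_
          rw [h4e]
          exact pow_dvd_pow 2 (by omega)
        exact (hb.pow w).trans h2
      have key : (2 : ℤ) ≡ 0 [ZMOD (4 : ℤ) ^ e] := by
        have hL := (c1.add c2).add c3
        have := (hL.symm.trans (heqZ ▸ c4))
        simpa using this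
      have hdvd : ((4 : ℤ) ^ e) ∣ 2 := Int.modEq_zero_iff_dvd.mp key
      have hle : ((4 : ℤ) ^ e) ≤ 2 := Int.le_of_dvd (by norm_num) hdvd
      have h4le : (4 : ℤ) ≤ 4 ^ e := le_self_pow₀ (by norm_num) he.ne'
      omega
    · exact hx2
  -- z is odd
  have hzodd : Odd z := by
    rcases Nat.even_or_odd z with hz2 | hz2
    · exfalso
      have h41 : (4 : ℤ) ≡ 1 [ZMOD 3] := Int.modEq_iff_dvd.mpr ⟨-1, by ring⟩
      have h4e1 : (4 : ℤ) ^ e ≡ 1 [ZMOD 3] := by simpa using h41.pow e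
      have d1 : ((4 : ℤ) ^ e - 1) ^ x ≡ 0 [ZMOD 3] := by
        have hb : ((4 : ℤ) ^ e - 1) ≡ 0 [ZMOD 3] := by
          simpa using h4e1.sub_right 1
        simpa [zero_pow hx.ne'] using hb.pow x
      have d2 : ((4 : ℤ)) ^ (e * y) ≡ 1 [ZMOD 3] := by simpa using h41.pow (e * y)
      have d3 : ((4 : ℤ) ^ e + 1) ^ z ≡ 1 [ZMOD 3] := by
        have hb : ((4 : ℤ) ^ e + 1) ≡ -1 [ZMOD 3] := by
          have := h4e1.add_right 1
          exact this.trans (Int.modEq_iff_dvd.mpr ⟨-1, by ring⟩)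
        calc ((4 : ℤ) ^ e + 1) ^ z ≡ (-1) ^ z [ZMOD 3] := hb.pow z
          _ = 1 := hz2.neg_one_pow
      have d4 : ((4 : ℤ) ^ e + 2) ^ w ≡ 0 [ZMOD 3] := by
        have hb : ((4 : ℤ) ^ e + 2) ≡ 0 [ZMOD 3] := by
          have := h4e1.add_right 2
          exact this.trans (Int.modEq_zero_iff_dvd.mpr ⟨1, by ring⟩)
        simpa [zero_pow hw.ne'] using hb.pow w
      have key : (2 : ℤ) ≡ 0 [ZMOD 3] := by
        have hL := (d1.add d2).add d3
        have := (hL.symm.trans (heqZ ▸ d4))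
        simpa using this
      have : (3 : ℤ) ∣ 2 := Int.modEq_zero_iff_dvd.mp key
      omega
    · exact hz2
  -- congruences mod (4^e)^2
  have m1 : ((4 : ℤ) ^ e - 1) ^ x ≡ (x : ℤ) * 4 ^ e - 1 [ZMOD ((4 : ℤ) ^ e) ^ 2] := by
    have hlem := one_add_pow_modeq_aux (-(4 : ℤ) ^ e) x
    rw [neg_pow, show (-1 : ℤ) ^ 2 = 1 by norm_num, one_mul] at hlem
    have h1 : (1 + -(4 : ℤ) ^ e) ^ x = -(((4 : ℤ) ^ e - 1) ^ x) := by
      rw [show (1 + -(4 : ℤ) ^ e) = -((4 : ℤ) ^ e - 1) by ring, hxodd.neg_pow]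
    rw [h1] at hlem
    have := hlem.neg
    simpa [neg_neg, neg_add, sub_eq_add_neg, mul_comm] using this
  have m3 : ((4 : ℤ) ^ e + 1) ^ z ≡ 1 + (z : ℤ) * 4 ^ e [ZMOD ((4 : ℤ) ^ e) ^ 2] := by
    simpa [add_comm] using one_add_pow_modeq_aux ((4 : ℤ) ^ e) z
  have m4 : ((4 : ℤ) ^ e + 2) ^ w ≡ 2 ^ w [ZMOD ((4 : ℤ) ^ e) ^ 2] := by
    have hfac : (4 : ℤ) ^ e + 2 = 2 * (2 ^ (2 * e - 1) + 1) := by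
      have hpow : (2 : ℤ) * 2 ^ (2 * e - 1) = 2 ^ (2 * e) := by
        rw [← pow_succ']
        congr 1
        omega
      rw [h4e, ← hpow]
      ring
    obtain ⟨t, ht⟩ : (2 : ℤ) ^ (2 * e - 1) ∣ ((2 ^ (2 * e - 1) + 1) ^ w - 1) := by
      have hb : ((2 : ℤ) ^ (2 * e - 1) + 1) ≡ 1 [ZMOD (2 : ℤ) ^ (2 * e - 1)] :=
        Int.modEq_iff_dvd.mpr ⟨-1, by ring⟩
      obtain ⟨s, hs⟩ := (hb.pow w).dvd
      rw [one_pow] at hs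
      exact ⟨-s, by linarith⟩
    have h2w : ((4 : ℤ) ^ e) ^ 2 ∣ 2 ^ w * 2 ^ (2 * e - 1) := by
      rw [h4e, ← pow_mul, ← pow_add]
      exact pow_dvd_pow 2 (by omega)
    refine (Int.modEq_iff_dvd.mpr ?_).symm
    have hdiff : ((4 : ℤ) ^ e + 2) ^ w - 2 ^ w = (2 ^ w * 2 ^ (2 * e - 1)) * t := by
      rw [hfac, mul_pow]
      linear_combination (2 : ℤ) ^ w * ht
    rw [hdiff]
    exact h2w.mul_right t
  have h2weq : (2 : ℤ) ^ w = 4 ^ e * 2 ^ (w - 2 * e) := by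
    rw [h4e, ← pow_add]
    congr 1
    omega
  obtain ⟨a, ha⟩ := hxodd
  obtain ⟨b, hb⟩ := hzodd
  -- rule out y = 1
  have hy2 : 2 ≤ y := by
    by_contra hy1
    have hy1 : y = 1 := by omega
    subst hy1
    have m2 : ((4 : ℤ)) ^ (e * 1) ≡ (0 : ℤ) + 4 ^ e [ZMOD ((4 : ℤ) ^ e) ^ 2] := by
      simp [Int.ModEq.refl]
    have big := ((m1.add m2).add m3).symm.trans (heqZ ▸ m4)
    have hd := big.dvd
    have hrw : (2 : ℤ) ^ w - ((x : ℤ) * 4 ^ e - 1 + ((0 : ℤ) + 4 ^ e) + (1 + (z : ℤ) * 4 ^ e))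
        = (4 : ℤ) ^ e * 2 ^ (w - 2 * e) - 4 ^ e * ((x : ℤ) + z + 1) := by
      rw [h2weq]; ring
    rw [hrw, sq] at hd
    have hcanc := cancel_aux _ _ _ hNne hd
    -- 2 divides 4^e and 2^(w-2e), hence 2 ∣ x+z+1, contradiction with x,z odd
    have h24 : (2 : ℤ) ∣ (4 : ℤ) ^ e := by
      rw [h4e]; exact dvd_pow_self 2 (by omega)
    have h2p : (2 : ℤ) ∣ (2 : ℤ) ^ (w - 2 * e) := dvd_pow_self 2 (by omega)
    have h2d : (2 : ℤ) ∣ (2 : ℤ) ^ (w - 2 * e) - ((x : ℤ) + z + 1) := h24.trans hcanc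
    have : (2 : ℤ) ∣ ((x : ℤ) + z + 1) := by
      have := dvd_sub h2p h2d
      simpa using this
    obtain ⟨k, hk⟩ := this
    have hxz : (x : ℤ) = 2 * a + 1 := by exact_mod_cast congrArg (Nat.cast : ℕ → ℤ) ha
    have hzz : (z : ℤ) = 2 * b + 1 := by exact_mod_cast congrArg (Nat.cast : ℕ → ℤ) hb
    omega
  refine ⟨hy2, ?_⟩
  have m2 : ((4 : ℤ)) ^ (e * y) ≡ 0 [ZMOD ((4 : ℤ) ^ e) ^ 2] := by
    refine Int.modEq_zero_iff_dvd.mpr ?_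
    rw [← pow_mul]
    exact pow_dvd_pow 4 (Nat.mul_le_mul_left e hy2)
  have big := ((m1.add m2).add m3).symm.trans (heqZ ▸ m4)
  have hd := big.dvd
  have hrw : (2 : ℤ) ^ w - ((x : ℤ) * 4 ^ e - 1 + (0 : ℤ) + (1 + (z : ℤ) * 4 ^ e))
      = (4 : ℤ) ^ e * 2 ^ (w - 2 * e) - 4 ^ e * ((x : ℤ) + z) := by
    rw [h2weq]; ring
  rw [hrw, sq] at hd
  have hcanc := cancel_aux _ _ _ hNne hd
  rw [Nat.modEq_iff_dvd]
  push_cast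
  exact hcanc
end

section
/- Let e be a positive integer and let (x, y, z, w) be a solution in positive integers of (4^e−1)^x + 4^{e·y} + (4^e+1)^z = (4^e+2)^w with w ≥ 2e + 1. If w ≥ 4e, then x + z ≡ 0 (mod 4^e); and if w < 4e and (e, w) ≠ (1, 3), then x + z = 2^{w−2e}. -/
/-!
Put `a = 4 ^ e` and work modulo `a ^ 2 = 16 ^ e`. Reducing mod 4 and mod 3 shows that `x` and `z`
are odd, so the binomial theorem gives `(a - 1) ^ x ≡ x a - 1` and `(a + 1) ^ z ≡ z a + 1`, while
`(a + 2) ^ w = 2 ^ w (2 ^ (2e-1) + 1) ^ w ≡ 2 ^ w` because `w ≥ 2e + 1`. Hence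
`(x + z) a + a ^ y ≡ 2 ^ w`. Modulo `2a` this rules out `y = 1` (`x + z + 1` is odd), so `a ^ y`
vanishes and `x + z ≡ 2 ^ (w - 2e) (mod a)`. For `w ≥ 4e` the right-hand side is `0`. For `w < 4e`
comparing sizes gives `x, z ≤ w + 1`, so `x + z ≤ 8e ≤ a` once `e ≥ 2`, and the congruence between
these two small numbers is an equality.
-/

lemma add_one_pow_modEq_sq (a : ℤ) (n : ℕ) : (a + 1) ^ n ≡ n * a + 1 [ZMOD a ^ 2] :=
  (Int.modEq_iff_dvd.mpr <| by
    simpa [add_comm, sub_sub, mul_comm] using sq_dvd_add_pow_sub_sub a 1 n).symm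

lemma sub_one_pow_modEq_sq_of_odd (a : ℤ) {n : ℕ} (hn : Odd n) :
    (a - 1) ^ n ≡ n * a - 1 [ZMOD a ^ 2] := by
  have h := (add_one_pow_modEq_sq (-a) n).neg
  rw [neg_sq, ← hn.neg_pow] at h
  convert h using 1 <;> ring

lemma mul_add_one_pow_modEq (b c : ℤ) (n : ℕ) : (c * (b + 1)) ^ n ≡ c ^ n [ZMOD c ^ n * b] := by
  simpa [mul_pow] using ((Int.add_modEq_left (n := b) (a := 1)).pow n).mul_left' (c := c ^ n)

lemma four_pow_eq_two_pow_two_mul {R : Type*} [Semiring R] (e : ℕ) :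
    (4 : R) ^ e = 2 ^ (2 * e) := by
  rw [pow_mul]; norm_num

lemma eight_mul_le_four_pow {e : ℕ} (he : 2 ≤ e) : 8 * e ≤ 4 ^ e := by
  induction e, he using Nat.le_induction with
  | base => norm_num
  | succ n hn ih => rw [pow_succ]; omega

lemma four_pow_add_two_pow_modEq {e w : ℕ} (he : 0 < e) (hw : 2 * e + 1 ≤ w) :
    ((4 : ℤ) ^ e + 2) ^ w ≡ 2 ^ w [ZMOD (4 ^ e) ^ 2] := by
  obtain ⟨m, hm⟩ : ∃ m, 2 * e = m + 1 := ⟨2 * e - 1, by omega⟩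
  have hbase : (4 : ℤ) ^ e + 2 = 2 * (2 ^ m + 1) := by
    rw [four_pow_eq_two_pow_two_mul, hm, pow_succ]; ring
  rw [hbase]
  refine (mul_add_one_pow_modEq _ 2 w).of_dvd ?_
  rw [four_pow_eq_two_pow_two_mul, ← pow_mul, ← pow_add]
  exact pow_dvd_pow 2 (by omega)

lemma four_pow_add_two_pow_le {e w : ℕ} (he : 0 < e) (hw : w < 4 * e) :
    ((4 : ℤ) ^ e + 2) ^ w ≤ (4 ^ e - 1) ^ (w + 2) := by
  have h4 : (4 : ℤ) ≤ 4 ^ e := le_self_pow₀ (by norm_num) he.ne'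
  have hb : (0 : ℤ) ≤ 4 ^ e - 1 := by linarith
  have hsq : 2 * 2 ^ w ≤ ((4 : ℤ) ^ e) ^ 2 := by
    rw [four_pow_eq_two_pow_two_mul, ← pow_mul, ← pow_succ']
    exact pow_le_pow_right₀ (by norm_num) (by omega)
  calc ((4 : ℤ) ^ e + 2) ^ w ≤ (2 * (4 ^ e - 1)) ^ w := by gcongr; linarith
    _ = 2 ^ w * (4 ^ e - 1) ^ w := mul_pow _ _ _
    _ ≤ (4 ^ e - 1) ^ 2 * (4 ^ e - 1) ^ w :=
        mul_le_mul_of_nonneg_right (by nlinarith) (pow_nonneg hb _)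
    _ = (4 ^ e - 1) ^ (w + 2) := by ring

def IsSolution (e x y z w : ℕ) : Prop :=
  ((4 : ℤ) ^ e - 1) ^ x + 4 ^ (e * y) + (4 ^ e + 1) ^ z = (4 ^ e + 2) ^ w

namespace IsSolution

variable {e x y z w : ℕ}

lemma odd_x (h : IsSolution e x y z w) (he : 0 < e) (hy : 0 < y) (hw : 2 ≤ w) : Odd x := by
  have h4 := congrArg (Int.cast : ℤ → ZMod 4) h
  push_cast at h4
  rw [show (4 : ZMod 4) = 0 from rfl, zero_pow he.ne', zero_pow (by positivity)] at h4
  simp only [zero_sub, add_zero, zero_add, one_pow] at h4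
  rw [← Nat.sub_add_cancel hw, pow_add, show (2 : ZMod 4) ^ 2 = 0 from rfl, mul_zero] at h4
  refine (Nat.even_or_odd x).resolve_left fun hx => ?_
  rw [hx.neg_one_pow] at h4
  exact absurd h4 (by decide)

lemma odd_z (h : IsSolution e x y z w) (hx : 0 < x) (hw : 0 < w) : Odd z := by
  have h3 := congrArg (Int.cast : ℤ → ZMod 3) h
  push_cast at h3
  rw [show (4 : ZMod 3) = 1 from rfl] at h3
  simp only [one_pow, sub_self, zero_pow hx.ne', zero_add] at h3
  rw [show (1 : ZMod 3) + 2 = 0 from rfl, show (1 : ZMod 3) + 1 = -1 from rfl,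
    zero_pow hw.ne'] at h3
  refine (Nat.even_or_odd z).resolve_left fun hz => ?_
  rw [hz.neg_one_pow] at h3
  exact absurd h3 (by decide)

lemma modEq_two_pow_of_odd (h : IsSolution e x y z w) (he : 0 < e) (hx : Odd x)
    (hw : 2 * e + 1 ≤ w) : (x + z : ℤ) * 4 ^ e + 4 ^ (e * y) ≡ 2 ^ w [ZMOD (4 ^ e) ^ 2] := by
  have hsum := ((sub_one_pow_modEq_sq_of_odd (4 ^ e) hx).add_right (4 ^ (e * y))).add
    (add_one_pow_modEq_sq (4 ^ e) z)
  rw [h] at hsum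
  calc (x + z : ℤ) * 4 ^ e + 4 ^ (e * y) = (x * 4 ^ e - 1) + 4 ^ (e * y) + (z * 4 ^ e + 1) := by
        ring
    _ ≡ ((4 : ℤ) ^ e + 2) ^ w [ZMOD (4 ^ e) ^ 2] := hsum.symm
    _ ≡ 2 ^ w [ZMOD (4 ^ e) ^ 2] := four_pow_add_two_pow_modEq he hw

lemma two_le_y (h : IsSolution e x y z w) (he : 0 < e) (hy : 0 < y) (hw : 2 * e + 1 ≤ w) :
    2 ≤ y := by
  have hx := h.odd_x he hy (by omega)
  have hz := h.odd_z hx.pos (by omega)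
  by_contra hy2
  obtain rfl : y = 1 := by omega
  have h2a : 2 * 4 ^ e ∣ ((4 : ℤ) ^ e) ^ 2 := by
    rw [sq]
    exact mul_dvd_mul_right (dvd_pow (by norm_num) he.ne') _
  have hmod := (h.modEq_two_pow_of_odd he hx hw).of_dvd h2a
  have h2w : 2 * 4 ^ e ∣ (2 : ℤ) ^ w := by
    rw [four_pow_eq_two_pow_two_mul, ← pow_succ']
    exact pow_dvd_pow 2 (by omega)
  have hdvd : 2 * 4 ^ e ∣ ((x + z + 1 : ℕ) : ℤ) * 4 ^ e := by
    have := (hmod.dvd_iff).mpr h2w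
    convert this using 1
    push_cast; ring
  have h2 : (2 : ℤ) ∣ ((x + z + 1 : ℕ) : ℤ) := (mul_dvd_mul_iff_right (by positivity)).mp hdvd
  have hodd : Odd (x + z + 1) := (hx.add_odd hz).add_one
  exact Nat.not_even_iff_odd.mpr hodd (even_iff_two_dvd.mpr (by exact_mod_cast h2))

lemma add_modEq_two_pow (h : IsSolution e x y z w) (he : 0 < e) (hy : 0 < y)
    (hw : 2 * e + 1 ≤ w) : x + z ≡ 2 ^ (w - 2 * e) [MOD 4 ^ e] := by
  have hlin := h.modEq_two_pow_of_odd he (h.odd_x he hy (by omega)) hw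
  have hy0 : (4 : ℤ) ^ (e * y) ≡ 0 [ZMOD (4 ^ e) ^ 2] := by
    rw [Int.modEq_zero_iff_dvd, pow_mul]
    exact pow_dvd_pow _ (h.two_le_y he hy hw)
  have h2w : (2 : ℤ) ^ w = 2 ^ (w - 2 * e) * 4 ^ e := by
    rw [four_pow_eq_two_pow_two_mul, ← pow_add, Nat.sub_add_cancel (by omega)]
  have hlin' := (Int.ModEq.refl ((x + z : ℤ) * 4 ^ e)).add hy0
  rw [add_zero] at hlin'
  have hdvd : 4 ^ e * 4 ^ e ∣ (2 ^ (w - 2 * e) - (x + z : ℤ)) * 4 ^ e := by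
    rw [← sq, sub_mul, ← h2w]
    exact (hlin'.symm.trans hlin).dvd
  rw [← Int.natCast_modEq_iff, Int.modEq_iff_dvd]
  push_cast
  exact (mul_dvd_mul_iff_right (by positivity)).mp hdvd

lemma x_le_add_one_and_z_le_add_one (h : IsSolution e x y z w) (he : 0 < e) (hw : w < 4 * e) :
    x ≤ w + 1 ∧ z ≤ w + 1 := by
  unfold IsSolution at h
  have h4 : (4 : ℤ) ≤ 4 ^ e := le_self_pow₀ (by norm_num) he.ne'
  have hbase : (1 : ℤ) < 4 ^ e - 1 := by linarith
  have hbound := four_pow_add_two_pow_le he hw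
  have hx : ((4 : ℤ) ^ e - 1) ^ x < (4 ^ e - 1) ^ (w + 2) := by
    have : 0 < (4 : ℤ) ^ (e * y) + (4 ^ e + 1) ^ z := by positivity
    linarith
  have hz : ((4 : ℤ) ^ e - 1) ^ z < (4 ^ e - 1) ^ (w + 2) := by
    have : 0 < ((4 : ℤ) ^ e - 1) ^ x + 4 ^ (e * y) := by positivity
    have : ((4 : ℤ) ^ e - 1) ^ z ≤ (4 ^ e + 1) ^ z := by gcongr; linarith
    linarith
  constructor
  · have := (pow_lt_pow_iff_right₀ hbase).mp hx; omega
  · have := (pow_lt_pow_iff_right₀ hbase).mp hz; omega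

end IsSolution

theorem x_plus_z_dichotomy_general (e x y z w : ℕ) (he : 0 < e)
    (hy : 0 < y)
    (heq : (4 ^ e - 1) ^ x + 4 ^ (e * y) + (4 ^ e + 1) ^ z = (4 ^ e + 2) ^ w)
    (hwe : 2 * e + 1 ≤ w) :
    (4 * e ≤ w → x + z ≡ 0 [MOD 4 ^ e]) ∧
    (w < 4 * e → (e, w) ≠ (1, 3) → x + z = 2 ^ (w - 2 * e)) := by
  have h : IsSolution e x y z w := by
    have := congrArg (Nat.cast : ℕ → ℤ) heq
    push_cast [Nat.cast_sub (Nat.one_le_pow _ _ (by norm_num) : 1 ≤ 4 ^ e)] at this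
    exact this
  have hmod := h.add_modEq_two_pow he hy hwe
  refine ⟨fun h4e => hmod.trans (Nat.modEq_zero_iff_dvd.mpr ?_),
    fun hlt hne => hmod.eq_of_abs_lt ?_⟩
  · rw [four_pow_eq_two_pow_two_mul]
    exact pow_dvd_pow 2 (by omega)
  · have he2 : 2 ≤ e := by
      by_contra
      exact hne (by ext <;> simp <;> omega)
    obtain ⟨hxw, hzw⟩ := h.x_le_add_one_and_z_le_add_one he hlt
    have h8e := eight_mul_le_four_pow he2
    have hpow : 2 ^ (w - 2 * e) < 4 ^ e := by
      rw [four_pow_eq_two_pow_two_mul]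
      exact Nat.pow_lt_pow_right (by norm_num) (by omega)
    have hpos : 0 < 2 ^ (w - 2 * e) := by positivity
    rw [abs_lt]
    constructor <;> omega

theorem x_plus_z_dichotomy (e x y z w : ℕ) (he : 0 < e)
    (hx : 0 < x) (hy : 0 < y) (hz : 0 < z) (hw : 0 < w)
    (heq : (4 ^ e - 1) ^ x + 4 ^ (e * y) + (4 ^ e + 1) ^ z = (4 ^ e + 2) ^ w)
    (hwe : 2 * e + 1 ≤ w) :
    (4 * e ≤ w → x + z ≡ 0 [MOD 4 ^ e]) ∧
    (w < 4 * e → (e, w) ≠ (1, 3) → x + z = 2 ^ (w - 2 * e)) :=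
  x_plus_z_dichotomy_general e x y z w he hy heq hwe
end
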